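/- Let P_Ω and P_T be orthogonal projections on a finite-dimensional inner product space with ‖P_Ω P_T‖ ≤ 1 − ε for some ε ∈ (0,1). Then for every vector H, ‖P_Ω H‖ ≤ ((1−ε)/ε)·‖P_{Ω⊥} H‖ + (1/ε)·‖P_{T⊥} H‖. -/

import Mathlib

theorem norm_proj_le_of_opNorm_le
    {E : Type*} [NormedAddCommGroup E] [InnerProductSpace ℝ E]
    [FiniteDimensional ℝ E]
    (Ω T : Submodule ℝ E)
    (PΩ PT : E →L[ℝ] E)
    (hPΩ : PΩ = Ω.subtypeL.comp (Submodule.orthogonalProjectionOnto Ω))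
    (hPT : PT = T.subtypeL.comp (Submodule.orthogonalProjectionOnto T))
    (ε : ℝ) (hε : ε ∈ Set.Ioo (0:ℝ) 1)
    (h : ‖PΩ.comp PT‖ ≤ 1 - ε) :
    ∀ H : E, ‖PΩ H‖ ≤ ((1 - ε) / ε) * ‖H - PΩ H‖ + (1 / ε) * ‖H - PT H‖ := by
  intro H
  obtain ⟨hε0, hε1⟩ := hε
  have hPΩnorm : ∀ x : E, ‖PΩ x‖ ≤ ‖x‖ := by
    intro x
    rw [hPΩ]
    simp only [ContinuousLinearMap.coe_comp', Function.comp_apply,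
      Submodule.coe_subtypeL', Submodule.coe_subtype]
    calc ‖(Submodule.orthogonalProjectionOnto Ω x : E)‖ = ‖Submodule.orthogonalProjectionOnto Ω x‖ := rfl
      _ ≤ ‖Submodule.orthogonalProjectionOnto Ω‖ * ‖x‖ := (Submodule.orthogonalProjectionOnto Ω).le_opNorm x
      _ ≤ 1 * ‖x‖ := by
          have := Submodule.orthogonalProjectionOnto_norm_le Ω
          nlinarith [norm_nonneg x]
      _ = ‖x‖ := one_mul ‖x‖
  -- PT is idempotent
  have hidem : PT (PT H) = PT H := by
    rw [hPT]
    simp only [ContinuousLinearMap.coe_comp', Function.comp_apply,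
      Submodule.coe_subtypeL', Submodule.coe_subtype]
    rw [Submodule.orthogonalProjectionOnto_mem_subspace_eq_self ⟨(Submodule.orthogonalProjectionOnto T H : E), (Submodule.orthogonalProjectionOnto T H).2⟩]
  have key : ‖PΩ (PT H)‖ ≤ (1 - ε) * ‖PT H‖ := by
    have h1 : ‖PΩ (PT H)‖ = ‖(PΩ.comp PT) (PT H)‖ := by
      simp [ContinuousLinearMap.comp_apply, hidem]
    rw [h1]
    calc ‖(PΩ.comp PT) (PT H)‖ ≤ ‖PΩ.comp PT‖ * ‖PT H‖ := (PΩ.comp PT).le_opNorm _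
      _ ≤ (1 - ε) * ‖PT H‖ := by nlinarith [norm_nonneg (PT H)]
  have hPTle : ‖PT H‖ ≤ ‖PΩ H‖ + ‖H - PΩ H‖ := by
    have h2 : ∀ x : E, ‖PT x‖ ≤ ‖x‖ := by
      intro x
      rw [hPT]
      simp only [ContinuousLinearMap.coe_comp', Function.comp_apply,
        Submodule.coe_subtypeL', Submodule.coe_subtype]
      calc ‖(Submodule.orthogonalProjectionOnto T x : E)‖ = ‖Submodule.orthogonalProjectionOnto T x‖ := rfl
        _ ≤ ‖Submodule.orthogonalProjectionOnto T‖ * ‖x‖ := (Submodule.orthogonalProjectionOnto T).le_opNorm x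
        _ ≤ 1 * ‖x‖ := by
            have := Submodule.orthogonalProjectionOnto_norm_le T
            nlinarith [norm_nonneg x]
        _ = ‖x‖ := one_mul ‖x‖
    calc ‖PT H‖ ≤ ‖H‖ := h2 H
      _ = ‖PΩ H + (H - PΩ H)‖ := by congr 1; abel
      _ ≤ ‖PΩ H‖ + ‖H - PΩ H‖ := norm_add_le _ _
  have main : ‖PΩ H‖ ≤ (1 - ε) * (‖PΩ H‖ + ‖H - PΩ H‖) + ‖H - PT H‖ := by
    calc ‖PΩ H‖ = ‖PΩ (PT H) + PΩ (H - PT H)‖ := by rw [← map_add, show PT H + (H - PT H) = H by abel]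
      _ ≤ ‖PΩ (PT H)‖ + ‖PΩ (H - PT H)‖ := norm_add_le _ _
      _ ≤ (1 - ε) * ‖PT H‖ + ‖H - PT H‖ := add_le_add key (hPΩnorm _)
      _ ≤ (1 - ε) * (‖PΩ H‖ + ‖H - PΩ H‖) + ‖H - PT H‖ := by nlinarith
  have hεpos : (0:ℝ) < ε := hε0
  have h3 : ((1 - ε) / ε) * ‖H - PΩ H‖ + (1 / ε) * ‖H - PT H‖
      = ((1 - ε) * ‖H - PΩ H‖ + ‖H - PT H‖) / ε := by
    field_simp
  rw [h3, le_div_iff₀ hεpos]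
  nlinarith
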